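/- Let E_max ≥ 1, let (b_t)_{t≥0} be i.i.d. Bernoulli(β) random variables, let e_0 ∈ {0,1}, and consider the greedy policy α_t = 1{e_t ≥ 1} with battery evolution e_{t+1} = min(e_t + b_t − α_t, E_max). Then almost surely lim_{T→∞} (1/T) ∑_{t=0}^{T−1} α_t = β; that is, the time-averaged energy consumption of the greedy policy equals β. -/

import Mathlib

open Finset MeasureTheory ProbabilityTheory

/-- **Time-averaged energy consumption of the greedy policy equals β.**
If `b_t` are i.i.d. Bernoulli(β) energy arrivals, `e_0 ∈ {0,1}`, and the
greedy policy `α_t = 1{e_t ≥ 1}` is used with battery evolution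
`e_{t+1} = min(e_t + b_t − α_t, E_max)`, then almost surely
`lim_{T→∞} (1/T) ∑_{t<T} α_t = β`. -/
theorem greedy_avg_energy_consumption_eq_beta
    {Ω : Type*} [MeasurableSpace Ω] (P : Measure Ω) [IsProbabilityMeasure P]
    (Emax : ℕ) (hE : 1 ≤ Emax) (β : ℝ) (hβ0 : 0 ≤ β) (hβ1 : β ≤ 1)
    (b : ℕ → Ω → ℕ)
    (hbmeas : ∀ t, Measurable (b t))
    (hb01 : ∀ t ω, b t ω ≤ 1)
    (hbBern : ∀ t, P {ω | b t ω = 1} = ENNReal.ofReal β)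
    (hbindep : iIndepFun b P)
    (e0 : ℕ) (he0 : e0 ≤ 1)
    (e α : ℕ → Ω → ℕ)
    (hgreedy : ∀ t ω, α t ω = if 1 ≤ e t ω then 1 else 0)
    (he0' : ∀ ω, e 0 ω = e0)
    (hrec : ∀ t ω, e (t + 1) ω = min (e t ω + b t ω - α t ω) Emax) :
    ∀ᵐ ω ∂P,
      Filter.Tendsto
        (fun T : ℕ => (∑ t ∈ Finset.range T, (α t ω : ℝ)) / T)
        Filter.atTop (nhds β) := by
  -- Pointwise battery analysis: battery stays in {0,1} and e (t+1) = b t.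
  have hle : ∀ t ω, e t ω ≤ 1 ∧ e (t + 1) ω = b t ω := by
    intro t
    induction t with
    | zero =>
        intro ω
        have h0 : e 0 ω ≤ 1 := by rw [he0']; exact he0
        refine ⟨h0, ?_⟩
        rw [hrec, hgreedy]
        have hb := hb01 0 ω
        split <;> omega
    | succ n ih =>
        intro ω
        have h1 : e (n + 1) ω ≤ 1 := by
          rw [(ih ω).2]; exact hb01 n ω
        refine ⟨h1, ?_⟩
        rw [hrec, hgreedy]
        have hb := hb01 (n + 1) ω
        split <;> omega
  have hαb : ∀ t ω, α (t + 1) ω = b t ω := by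
    intro t ω
    rw [hgreedy, (hle t ω).2]
    have hb := hb01 t ω
    split <;> omega
  have hα01 : ∀ t ω, α t ω ≤ 1 := by
    intro t ω; rw [hgreedy]; split <;> omega
  -- sums of α vs sums of b
  have hsum : ∀ ω T, ∑ t ∈ Finset.range (T + 1), α t ω
      = α 0 ω + ∑ t ∈ Finset.range T, b t ω := by
    intro ω T
    rw [Finset.sum_range_succ']
    simp only [hαb]
    ring
  -- real-valued arrivals
  set X : ℕ → Ω → ℝ := fun t ω => (b t ω : ℝ) with hX
  have hXmeas : ∀ t, Measurable (X t) := fun t =>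
    measurable_from_top.comp (hbmeas t)
  have hsets : ∀ t, MeasurableSet {ω | b t ω = 1} := fun t =>
    (hbmeas t) (measurableSet_singleton 1)
  -- representation as indicator
  have hrep : ∀ t ω, X t ω = ({ω | b t ω = 1}).indicator (fun _ => (1 : ℝ)) ω := by
    intro t ω
    by_cases h : b t ω = 1
    · simp [hX, h, Set.indicator_of_mem, Set.mem_setOf_eq]
    · have : b t ω = 0 := by have := hb01 t ω; omega
      simp [hX, this, Set.indicator_of_notMem, Set.mem_setOf_eq, h]
  have hint : Integrable (X 0) P := by
    have : Integrable (({ω | b 0 ω = 1}).indicator (fun _ => (1 : ℝ))) P :=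
      (integrable_const (1 : ℝ)).indicator (hsets 0)
    exact this.congr (Filter.Eventually.of_forall fun ω => (hrep 0 ω).symm)
  have hmean : ∫ ω, X 0 ω ∂P = β := by
    have h1 : ∫ ω, X 0 ω ∂P
        = ∫ ω, ({ω | b 0 ω = 1}).indicator (fun _ => (1 : ℝ)) ω ∂P :=
      integral_congr_ae (Filter.Eventually.of_forall fun ω => hrep 0 ω)
    rw [h1, integral_indicator_const _ (hsets 0), measureReal_def, hbBern 0]
    simp [ENNReal.toReal_ofReal hβ0]
  -- identical distribution
  have hident : ∀ i, IdentDistrib (X i) (X 0) P P := by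
    intro i
    have hmap : ∀ t, Measure.map (b t) P = Measure.map (b 0) P := by
      intro t
      apply MeasureTheory.Measure.ext_of_singleton
      intro n
      rw [Measure.map_apply (hbmeas t) (measurableSet_singleton n),
        Measure.map_apply (hbmeas 0) (measurableSet_singleton n)]
      have hpre : ∀ s m, (b s ⁻¹' {m} : Set Ω) = {ω | b s ω = m} := by
        intro s m; ext ω; simp
      rw [hpre, hpre]
      match n with
      | 0 =>
          have hc : ∀ s, ({ω | b s ω = 0} : Set Ω) = {ω | b s ω = 1}ᶜ := by
            intro s; ext ω; have := hb01 s ω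
            simp only [Set.mem_setOf_eq, Set.mem_compl_iff]; omega
          rw [hc t, hc 0, measure_compl (hsets t) (measure_ne_top _ _),
            measure_compl (hsets 0) (measure_ne_top _ _), hbBern, hbBern]
      | 1 => rw [hbBern, hbBern]
      | (m + 2) =>
          have hc : ∀ s, ({ω | b s ω = m + 2} : Set Ω) = ∅ := by
            intro s; ext ω; have := hb01 s ω
            simp only [Set.mem_setOf_eq, Set.mem_empty_iff_false, iff_false]
            omega
          rw [hc t, hc 0]
    have hbid : IdentDistrib (b i) (b 0) P P :=
      ⟨(hbmeas i).aemeasurable, (hbmeas 0).aemeasurable, hmap i⟩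
    exact hbid.comp measurable_from_top
  -- pairwise independence
  have hindep : Pairwise (Function.onFun (IndepFun · · P) X) := by
    intro i j hij
    exact ((hbindep.indepFun hij).comp measurable_from_top measurable_from_top)
  -- strong law of large numbers
  have hlln := ProbabilityTheory.strong_law_ae X hint hindep hident
  rw [hmean] at hlln
  filter_upwards [hlln] with ω hω
  -- convert to averages of b
  have hgω : Filter.Tendsto
      (fun T : ℕ => (∑ t ∈ Finset.range T, (b t ω : ℝ)) / T)
      Filter.atTop (nhds β) := by
    refine hω.congr fun T => ?_
    simp [hX, smul_eq_mul, div_eq_inv_mul]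
  -- difference tends to zero
  have hdiff : Filter.Tendsto
      (fun T : ℕ => (∑ t ∈ Finset.range T, (α t ω : ℝ)) / T
        - (∑ t ∈ Finset.range T, (b t ω : ℝ)) / T)
      Filter.atTop (nhds 0) := by
    rw [tendsto_zero_iff_abs_tendsto_zero]
    apply squeeze_zero (g := fun T : ℕ => 2 / (T : ℝ)) (fun T => abs_nonneg _)
    · intro T
      match T with
      | 0 => simp
      | (n + 1) =>
          have hA : (∑ t ∈ Finset.range (n + 1), (α t ω : ℝ))
              = (∑ t ∈ Finset.range (n + 1), (α t ω)) := by push_cast; ring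
          have hB : (∑ t ∈ Finset.range (n + 1), (b t ω : ℝ))
              = (∑ t ∈ Finset.range (n + 1), (b t ω)) := by push_cast; ring
          set A : ℕ := ∑ t ∈ Finset.range (n + 1), α t ω with hAdef
          set B : ℕ := ∑ t ∈ Finset.range (n + 1), b t ω with hBdef
          have hAB : A ≤ B + 2 ∧ B ≤ A + 2 := by
            have h1 : A = α 0 ω + ∑ t ∈ Finset.range n, b t ω := hsum ω n
            have h2 : B = (∑ t ∈ Finset.range n, b t ω) + b n ω :=
              Finset.sum_range_succ _ _
            have := hα01 0 ω
            have := hb01 n ω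
            omega
          have hbound : |(A : ℝ) - (B : ℝ)| ≤ 2 := by
            have h1 : (A : ℝ) ≤ (B : ℝ) + 2 := by exact_mod_cast hAB.1
            have h2 : (B : ℝ) ≤ (A : ℝ) + 2 := by exact_mod_cast hAB.2
            rw [abs_sub_le_iff]
            constructor <;> linarith
          rw [hA, hB, div_sub_div_same, abs_div, Nat.abs_cast]
          have hpos : (0 : ℝ) ≤ (n + 1 : ℕ) := by positivity
          exact div_le_div_of_nonneg_right hbound hpos |>.trans_eq rfl
    · exact tendsto_const_div_atTop_nhds_zero_nat 2
  have := hgω.add hdiff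
  rw [add_zero] at this
  refine this.congr fun T => ?_
  ring
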